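/- Let L be a finite-dimensional DG Lie algebra over a field k of characteristic 0 and S(L) its graded symmetric algebra with the DG Poisson Hopf structure (bracket extending the Lie bracket, Δ(a) = a⊗1+1⊗a and S(a) = -a for a ∈ L). Then for every a ∈ S(L), {S(a_{(1)}), a_{(2)}} = 0, where Δ(a) = a_{(1)} ⊗ a_{(2)} in Sweedler notation. -/

import Mathlib

open TensorProduct

namespace DGPH

variable {k : Type} [Field k]

/-- The `n`-th graded piece of the induced grading on a tensor product of graded modules. -/
def tgrade {M N : Type} [AddCommGroup M] [Module k M] [AddCommGroup N] [Module k N]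
    (𝒜 : ℤ → Submodule k M) (ℬ : ℤ → Submodule k N) (n : ℤ) : Submodule k (M ⊗[k] N) :=
  ⨆ ij : {q : ℤ × ℤ // q.1 + q.2 = n},
    Submodule.span k
      (Set.image2 (fun a b => a ⊗ₜ[k] b) ((𝒜 ij.1.1 : Set M)) ((ℬ ij.1.2 : Set N)))

/-- Characterization of the Koszul-signed multiplication on a tensor product:
`(a ⊗ b)(a' ⊗ b') = (-1)^{|a'||b|} (a a') ⊗ (b b')`. -/
def KoszulMulChar {M N : Type} [AddCommGroup M] [Module k M] [AddCommGroup N] [Module k N]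
    (𝒜 : ℤ → Submodule k M) (ℬ : ℤ → Submodule k N)
    (mulM : M →ₗ[k] M →ₗ[k] M) (mulN : N →ₗ[k] N →ₗ[k] N)
    (μ : (M ⊗[k] N) →ₗ[k] (M ⊗[k] N) →ₗ[k] (M ⊗[k] N)) : Prop :=
  ∀ ⦃i j : ℤ⦄ (a : M) ⦃a' : M⦄ ⦃b : N⦄ (b' : N), a' ∈ 𝒜 i → b ∈ ℬ j →
    μ (a ⊗ₜ[k] b) (a' ⊗ₜ[k] b') = ((-1 : k) ^ (i * j)) • ((mulM a a') ⊗ₜ[k] (mulN b b'))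

/-- Characterization of the Koszul-signed Poisson bracket of degree `p` on a tensor product:
`{a⊗b, a'⊗b'} = (-1)^{(|a'|+p)|b|} {a,a'} ⊗ (bb') + (-1)^{(|b|+p)|a'|} (aa') ⊗ {b,b'}`. -/
def KoszulBracketChar {M N : Type} [AddCommGroup M] [Module k M] [AddCommGroup N] [Module k N]
    (𝒜 : ℤ → Submodule k M) (ℬ : ℤ → Submodule k N)
    (mulM : M →ₗ[k] M →ₗ[k] M) (mulN : N →ₗ[k] N →ₗ[k] N)
    (brM : M →ₗ[k] M →ₗ[k] M) (brN : N →ₗ[k] N →ₗ[k] N) (p : ℤ)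
    (β : (M ⊗[k] N) →ₗ[k] (M ⊗[k] N) →ₗ[k] (M ⊗[k] N)) : Prop :=
  ∀ ⦃i j : ℤ⦄ (a : M) ⦃a' : M⦄ ⦃b : N⦄ (b' : N), a' ∈ 𝒜 i → b ∈ ℬ j →
    β (a ⊗ₜ[k] b) (a' ⊗ₜ[k] b') =
      ((-1 : k) ^ ((i + p) * j)) • ((brM a a') ⊗ₜ[k] (mulN b b')) +
      ((-1 : k) ^ ((j + p) * i)) • ((mulM a a') ⊗ₜ[k] (brN b b'))

/-- Characterization of the Koszul-signed differential on a tensor product: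
`d(a ⊗ b) = d a ⊗ b + (-1)^{|a|} a ⊗ d b`. -/
def KoszulDiffChar {M N : Type} [AddCommGroup M] [Module k M] [AddCommGroup N] [Module k N]
    (𝒜 : ℤ → Submodule k M) (dM : M →ₗ[k] M) (dN : N →ₗ[k] N)
    (D : M ⊗[k] N →ₗ[k] M ⊗[k] N) : Prop :=
  ∀ ⦃i : ℤ⦄ ⦃a : M⦄ (b : N), a ∈ 𝒜 i →
    D (a ⊗ₜ[k] b) = (dM a) ⊗ₜ[k] b + ((-1 : k) ^ i) • (a ⊗ₜ[k] (dN b))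

/-- Characterization of the Koszul twist `T(a ⊗ b) = (-1)^{|a||b|} b ⊗ a`. -/
def KoszulTwistChar {M N : Type} [AddCommGroup M] [Module k M] [AddCommGroup N] [Module k N]
    (𝒜 : ℤ → Submodule k M) (ℬ : ℤ → Submodule k N)
    (T : M ⊗[k] N →ₗ[k] N ⊗[k] M) : Prop :=
  ∀ ⦃i j : ℤ⦄ ⦃a : M⦄ ⦃b : N⦄, a ∈ 𝒜 i → b ∈ ℬ j →
    T (a ⊗ₜ[k] b) = ((-1 : k) ^ (i * j)) • (b ⊗ₜ[k] a)

section Structures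

variable (k)
variable (M : Type) [AddCommGroup M] [Module k M]

/-- A `ℤ`-graded associative unital algebra, given by unbundled data. -/
structure IsGradedAlgebra (𝒜 : ℤ → Submodule k M) (mul : M →ₗ[k] M →ₗ[k] M) (one : M) :
    Prop where
  indep : iSupIndep 𝒜
  total : (⨆ i, 𝒜 i) = ⊤
  mul_mem : ∀ ⦃i j : ℤ⦄ ⦃a b : M⦄, a ∈ 𝒜 i → b ∈ 𝒜 j → mul a b ∈ 𝒜 (i + j)
  one_mem : one ∈ 𝒜 0
  mul_assoc : ∀ a b c : M, mul (mul a b) c = mul a (mul b c)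
  one_mul : ∀ a : M, mul one a = a
  mul_one : ∀ a : M, mul a one = a

/-- A differential graded algebra. -/
structure IsDGAlgebra (𝒜 : ℤ → Submodule k M) (mul : M →ₗ[k] M →ₗ[k] M) (one : M)
    (d : M →ₗ[k] M) extends IsGradedAlgebra k M 𝒜 mul one : Prop where
  d_mem : ∀ ⦃i : ℤ⦄ ⦃a : M⦄, a ∈ 𝒜 i → d a ∈ 𝒜 (i + 1)
  d_sq : ∀ a : M, d (d a) = 0
  d_mul : ∀ ⦃i : ℤ⦄ ⦃a : M⦄ (b : M), a ∈ 𝒜 i →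
    d (mul a b) = mul (d a) b + ((-1 : k) ^ i) • mul a (d b)

/-- A differential graded Poisson algebra with Poisson bracket of degree `p`. -/
structure IsDGPoisson (𝒜 : ℤ → Submodule k M) (mul : M →ₗ[k] M →ₗ[k] M) (one : M)
    (bracket : M →ₗ[k] M →ₗ[k] M) (d : M →ₗ[k] M) (p : ℤ)
    extends IsDGAlgebra k M 𝒜 mul one d : Prop where
  gcomm : ∀ ⦃i j : ℤ⦄ ⦃a b : M⦄, a ∈ 𝒜 i → b ∈ 𝒜 j →
    mul a b = ((-1 : k) ^ (i * j)) • mul b a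
  bracket_mem : ∀ ⦃i j : ℤ⦄ ⦃a b : M⦄, a ∈ 𝒜 i → b ∈ 𝒜 j → bracket a b ∈ 𝒜 (i + j + p)
  bracket_antisymm : ∀ ⦃i j : ℤ⦄ ⦃a b : M⦄, a ∈ 𝒜 i → b ∈ 𝒜 j →
    bracket a b = -(((-1 : k) ^ ((i + p) * (j + p))) • bracket b a)
  bracket_jacobi : ∀ ⦃i j : ℤ⦄ ⦃a b : M⦄ (c : M), a ∈ 𝒜 i → b ∈ 𝒜 j →
    bracket a (bracket b c) =
      bracket (bracket a b) c + ((-1 : k) ^ ((i + p) * (j + p))) • bracket b (bracket a c)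
  bracket_leibniz : ∀ ⦃i j : ℤ⦄ ⦃a b : M⦄ (c : M), a ∈ 𝒜 i → b ∈ 𝒜 j →
    bracket a (mul b c) =
      mul (bracket a b) c + ((-1 : k) ^ ((i + p) * j)) • mul b (bracket a c)
  d_bracket : ∀ ⦃i : ℤ⦄ ⦃a : M⦄ (b : M), a ∈ 𝒜 i →
    d (bracket a b) = bracket (d a) b + ((-1 : k) ^ (i + p)) • bracket a (d b)

/-- A `ℤ`-graded coalgebra, given by unbundled data. -/
structure IsGradedCoalgebra (𝒜 : ℤ → Submodule k M) (comul : M →ₗ[k] M ⊗[k] M)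
    (counit : M →ₗ[k] k) : Prop where
  comul_mem : ∀ ⦃i : ℤ⦄ ⦃a : M⦄, a ∈ 𝒜 i → comul a ∈ tgrade 𝒜 𝒜 i
  counit_zero : ∀ ⦃i : ℤ⦄ ⦃a : M⦄, a ∈ 𝒜 i → i ≠ 0 → counit a = 0
  coassoc : ∀ a : M,
    (TensorProduct.assoc k M M M) ((TensorProduct.map comul LinearMap.id) (comul a)) =
      (TensorProduct.map LinearMap.id comul) (comul a)
  counit_comul_left : ∀ a : M,
    (TensorProduct.lid k M) ((TensorProduct.map counit LinearMap.id) (comul a)) = a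
  counit_comul_right : ∀ a : M,
    (TensorProduct.rid k M) ((TensorProduct.map LinearMap.id counit) (comul a)) = a

/-- A `ℤ`-graded bialgebra (comultiplication is an algebra map for the Koszul-signed
multiplication on the tensor square). -/
structure IsGradedBialgebra (𝒜 : ℤ → Submodule k M) (mul : M →ₗ[k] M →ₗ[k] M) (one : M)
    (comul : M →ₗ[k] M ⊗[k] M) (counit : M →ₗ[k] k) : Prop where
  alg : IsGradedAlgebra k M 𝒜 mul one
  coalg : IsGradedCoalgebra k M 𝒜 comul counit
  comul_one : comul one = one ⊗ₜ[k] one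
  counit_one : counit one = 1
  counit_mul : ∀ a b : M, counit (mul a b) = counit a * counit b
  comul_mul : ∃ mul₂ : (M ⊗[k] M) →ₗ[k] (M ⊗[k] M) →ₗ[k] (M ⊗[k] M),
    KoszulMulChar 𝒜 𝒜 mul mul mul₂ ∧
      ∀ a b : M, comul (mul a b) = mul₂ (comul a) (comul b)

/-- A `ℤ`-graded Hopf algebra. -/
structure IsGradedHopf (𝒜 : ℤ → Submodule k M) (mul : M →ₗ[k] M →ₗ[k] M) (one : M)
    (comul : M →ₗ[k] M ⊗[k] M) (counit : M →ₗ[k] k) (S : M →ₗ[k] M) : Prop where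
  bialg : IsGradedBialgebra k M 𝒜 mul one comul counit
  antipode_mem : ∀ ⦃i : ℤ⦄ ⦃a : M⦄, a ∈ 𝒜 i → S a ∈ 𝒜 i
  antipode_left : ∀ a : M,
    TensorProduct.lift mul ((TensorProduct.map S LinearMap.id) (comul a)) = counit a • one
  antipode_right : ∀ a : M,
    TensorProduct.lift mul ((TensorProduct.map LinearMap.id S) (comul a)) = counit a • one

/-- `d` is a coderivation (with Koszul signs) and `ε ∘ d = 0`. -/
def CoderivationProp (𝒜 : ℤ → Submodule k M) (comul : M →ₗ[k] M ⊗[k] M)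
    (counit : M →ₗ[k] k) (d : M →ₗ[k] M) : Prop :=
  (∀ a : M, counit (d a) = 0) ∧
  ∃ D : M ⊗[k] M →ₗ[k] M ⊗[k] M, KoszulDiffChar 𝒜 d d D ∧
    ∀ a : M, comul (d a) = D (comul a)

/-- A differential graded bialgebra. -/
structure IsDGBialgebra (𝒜 : ℤ → Submodule k M) (mul : M →ₗ[k] M →ₗ[k] M) (one : M)
    (comul : M →ₗ[k] M ⊗[k] M) (counit : M →ₗ[k] k) (d : M →ₗ[k] M) : Prop where
  bialg : IsGradedBialgebra k M 𝒜 mul one comul counit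
  dga : IsDGAlgebra k M 𝒜 mul one d
  coderiv : CoderivationProp k M 𝒜 comul counit d

/-- A differential graded Hopf algebra. -/
structure IsDGHopf (𝒜 : ℤ → Submodule k M) (mul : M →ₗ[k] M →ₗ[k] M) (one : M)
    (comul : M →ₗ[k] M ⊗[k] M) (counit : M →ₗ[k] k) (d : M →ₗ[k] M) (S : M →ₗ[k] M) :
    Prop where
  dgbialg : IsDGBialgebra k M 𝒜 mul one comul counit d
  antipode_mem : ∀ ⦃i : ℤ⦄ ⦃a : M⦄, a ∈ 𝒜 i → S a ∈ 𝒜 i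
  antipode_left : ∀ a : M,
    TensorProduct.lift mul ((TensorProduct.map S LinearMap.id) (comul a)) = counit a • one
  antipode_right : ∀ a : M,
    TensorProduct.lift mul ((TensorProduct.map LinearMap.id S) (comul a)) = counit a • one

/-- A differential graded Poisson bialgebra (bracket of degree 0). -/
structure IsDGPoissonBialgebra (𝒜 : ℤ → Submodule k M) (mul : M →ₗ[k] M →ₗ[k] M) (one : M)
    (bracket : M →ₗ[k] M →ₗ[k] M) (d : M →ₗ[k] M)
    (comul : M →ₗ[k] M ⊗[k] M) (counit : M →ₗ[k] k) : Prop where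
  poisson : IsDGPoisson k M 𝒜 mul one bracket d 0
  dgbialg : IsDGBialgebra k M 𝒜 mul one comul counit d
  comul_bracket : ∃ br₂ : (M ⊗[k] M) →ₗ[k] (M ⊗[k] M) →ₗ[k] (M ⊗[k] M),
    KoszulBracketChar 𝒜 𝒜 mul mul bracket bracket 0 br₂ ∧
      ∀ a b : M, comul (bracket a b) = br₂ (comul a) (comul b)

/-- A differential graded Poisson Hopf algebra (bracket of degree 0). -/
structure IsDGPoissonHopf (𝒜 : ℤ → Submodule k M) (mul : M →ₗ[k] M →ₗ[k] M) (one : M)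
    (bracket : M →ₗ[k] M →ₗ[k] M) (d : M →ₗ[k] M)
    (comul : M →ₗ[k] M ⊗[k] M) (counit : M →ₗ[k] k) (S : M →ₗ[k] M) : Prop where
  toPoissonBialg : IsDGPoissonBialgebra k M 𝒜 mul one bracket d comul counit
  antipode_mem : ∀ ⦃i : ℤ⦄ ⦃a : M⦄, a ∈ 𝒜 i → S a ∈ 𝒜 i
  antipode_left : ∀ a : M,
    TensorProduct.lift mul ((TensorProduct.map S LinearMap.id) (comul a)) = counit a • one
  antipode_right : ∀ a : M,
    TensorProduct.lift mul ((TensorProduct.map LinearMap.id S) (comul a)) = counit a • one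

end Structures

/-- A homomorphism of differential graded algebras (unbundled data). -/
structure IsDGAlgHom {M N : Type} [AddCommGroup M] [Module k M] [AddCommGroup N] [Module k N]
    (𝒜 : ℤ → Submodule k M) (mulM : M →ₗ[k] M →ₗ[k] M) (oneM : M) (dM : M →ₗ[k] M)
    (ℬ : ℤ → Submodule k N) (mulN : N →ₗ[k] N →ₗ[k] N) (oneN : N) (dN : N →ₗ[k] N)
    (f : M →ₗ[k] N) : Prop where
  map_mem : ∀ ⦃i : ℤ⦄ ⦃a : M⦄, a ∈ 𝒜 i → f a ∈ ℬ i
  map_one : f oneM = oneN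
  map_mul : ∀ a b : M, f (mulM a b) = mulN (f a) (f b)
  map_d : ∀ a : M, f (dM a) = dN (f a)

/-- A homomorphism of differential graded Poisson algebras. -/
structure IsDGPoissonHom {M N : Type} [AddCommGroup M] [Module k M] [AddCommGroup N] [Module k N]
    (𝒜 : ℤ → Submodule k M) (mulM : M →ₗ[k] M →ₗ[k] M) (oneM : M)
    (brM : M →ₗ[k] M →ₗ[k] M) (dM : M →ₗ[k] M)
    (ℬ : ℤ → Submodule k N) (mulN : N →ₗ[k] N →ₗ[k] N) (oneN : N)
    (brN : N →ₗ[k] N →ₗ[k] N) (dN : N →ₗ[k] N)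
    (f : M →ₗ[k] N)
    extends IsDGAlgHom 𝒜 mulM oneM dM ℬ mulN oneN dN f : Prop where
  map_bracket : ∀ a b : M, f (brM a b) = brN (f a) (f b)

/-- `(E, m, h)` is the universal enveloping algebra of the DG Poisson algebra
`(A, 𝒜, mulA, oneA, brA, dA)` with bracket of degree `p`. -/
structure IsUEA {A E : Type} [AddCommGroup A] [Module k A] [AddCommGroup E] [Module k E]
    (𝒜 : ℤ → Submodule k A) (mulA : A →ₗ[k] A →ₗ[k] A) (oneA : A)
    (brA : A →ₗ[k] A →ₗ[k] A) (dA : A →ₗ[k] A) (p : ℤ)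
    (ℰ : ℤ → Submodule k E) (mulE : E →ₗ[k] E →ₗ[k] E) (oneE : E) (dE : E →ₗ[k] E)
    (m h : A →ₗ[k] E) : Prop where
  dga : IsDGAlgebra k E ℰ mulE oneE dE
  m_hom : IsDGAlgHom 𝒜 mulA oneA dA ℰ mulE oneE dE m
  h_mem : ∀ ⦃i : ℤ⦄ ⦃a : A⦄, a ∈ 𝒜 i → h a ∈ ℰ (i + p)
  h_d : ∀ a : A, h (dA a) = dE (h a)
  h_lie : ∀ ⦃i j : ℤ⦄ ⦃a b : A⦄, a ∈ 𝒜 i → b ∈ 𝒜 j →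
    h (brA a b) = mulE (h a) (h b) - ((-1 : k) ^ ((i + p) * (j + p))) • mulE (h b) (h a)
  m_bracket : ∀ ⦃i j : ℤ⦄ ⦃a b : A⦄, a ∈ 𝒜 i → b ∈ 𝒜 j →
    m (brA a b) = mulE (h a) (m b) - ((-1 : k) ^ ((i + p) * j)) • mulE (m b) (h a)
  h_mul : ∀ ⦃i j : ℤ⦄ ⦃a b : A⦄, a ∈ 𝒜 i → b ∈ 𝒜 j →
    h (mulA a b) = mulE (m a) (h b) + ((-1 : k) ^ (i * j)) • mulE (m b) (h a)
  universal : ∀ (D : Type) [AddCommGroup D] [Module k D]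
    (𝒟 : ℤ → Submodule k D) (mulD : D →ₗ[k] D →ₗ[k] D) (oneD : D) (dD : D →ₗ[k] D)
    (f g : A →ₗ[k] D),
    IsDGAlgebra k D 𝒟 mulD oneD dD →
    IsDGAlgHom 𝒜 mulA oneA dA 𝒟 mulD oneD dD f →
    (∀ ⦃i : ℤ⦄ ⦃a : A⦄, a ∈ 𝒜 i → g a ∈ 𝒟 (i + p)) →
    (∀ a : A, g (dA a) = dD (g a)) →
    (∀ ⦃i j : ℤ⦄ ⦃a b : A⦄, a ∈ 𝒜 i → b ∈ 𝒜 j →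
      g (brA a b) = mulD (g a) (g b) - ((-1 : k) ^ ((i + p) * (j + p))) • mulD (g b) (g a)) →
    (∀ ⦃i j : ℤ⦄ ⦃a b : A⦄, a ∈ 𝒜 i → b ∈ 𝒜 j →
      f (brA a b) = mulD (g a) (f b) - ((-1 : k) ^ ((i + p) * j)) • mulD (f b) (g a)) →
    (∀ ⦃i j : ℤ⦄ ⦃a b : A⦄, a ∈ 𝒜 i → b ∈ 𝒜 j →
      g (mulA a b) = mulD (f a) (g b) + ((-1 : k) ^ (i * j)) • mulD (f b) (g a)) →
    ∃! φ : E →ₗ[k] D, IsDGAlgHom ℰ mulE oneE dE 𝒟 mulD oneD dD φ ∧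
      φ ∘ₗ m = f ∧ φ ∘ₗ h = g

end DGPH

namespace DGPH

open TensorProduct

variable (k : Type) [Field k]

/-- A differential graded Lie algebra (bracket of degree 0). -/
structure IsDGLie (L : Type) [AddCommGroup L] [Module k L]
    (ℒ : ℤ → Submodule k L) (lie : L →ₗ[k] L →ₗ[k] L) (dL : L →ₗ[k] L) : Prop where
  indep : iSupIndep ℒ
  total : (⨆ i, ℒ i) = ⊤
  lie_mem : ∀ ⦃i j : ℤ⦄ ⦃a b : L⦄, a ∈ ℒ i → b ∈ ℒ j → lie a b ∈ ℒ (i + j)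
  lie_antisymm : ∀ ⦃i j : ℤ⦄ ⦃a b : L⦄, a ∈ ℒ i → b ∈ ℒ j →
    lie a b = -(((-1 : k) ^ (i * j)) • lie b a)
  lie_jacobi : ∀ ⦃i j : ℤ⦄ ⦃a b : L⦄ (c : L), a ∈ ℒ i → b ∈ ℒ j →
    lie a (lie b c) = lie (lie a b) c + ((-1 : k) ^ (i * j)) • lie b (lie a c)
  d_mem : ∀ ⦃i : ℤ⦄ ⦃a : L⦄, a ∈ ℒ i → dL a ∈ ℒ (i + 1)
  d_sq : ∀ a : L, dL (dL a) = 0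
  d_lie : ∀ ⦃i : ℤ⦄ ⦃a : L⦄ (b : L), a ∈ ℒ i →
    dL (lie a b) = lie (dL a) b + ((-1 : k) ^ i) • lie a (dL b)

/-- `(SL, ι)` is the graded symmetric algebra of the DG Lie algebra `L`, equipped with its
induced DG Poisson structure (the bracket extends `[·,·]_L` as a graded biderivation) and
its standard graded bialgebra structure (elements of `L` are primitive). -/
structure IsSymLieBialg (L : Type) [AddCommGroup L] [Module k L]
    (ℒ : ℤ → Submodule k L) (lie : L →ₗ[k] L →ₗ[k] L) (dL : L →ₗ[k] L)
    (SL : Type) [AddCommGroup SL] [Module k SL]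
    (𝒮 : ℤ → Submodule k SL) (mul : SL →ₗ[k] SL →ₗ[k] SL) (one : SL)
    (bracket : SL →ₗ[k] SL →ₗ[k] SL) (d : SL →ₗ[k] SL)
    (comul : SL →ₗ[k] SL ⊗[k] SL) (counit : SL →ₗ[k] k)
    (ι : L →ₗ[k] SL) : Prop where
  lieAlg : IsDGLie k L ℒ lie dL
  poisson : IsDGPoisson k SL 𝒮 mul one bracket d 0
  ι_mem : ∀ ⦃i : ℤ⦄ ⦃a : L⦄, a ∈ ℒ i → ι a ∈ 𝒮 i
  ι_bracket : ∀ a b : L, bracket (ι a) (ι b) = ι (lie a b)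
  ι_d : ∀ a : L, d (ι a) = ι (dL a)
  generates : ∀ P : Submodule k SL, one ∈ P → (∀ a : L, ι a ∈ P) →
    (∀ u v : SL, u ∈ P → v ∈ P → mul u v ∈ P) → P = ⊤
  bialg : IsGradedBialgebra k SL 𝒮 mul one comul counit
  dgbialg_d : CoderivationProp k SL 𝒮 comul counit d
  comul_ι : ∀ a : L, comul (ι a) = (ι a) ⊗ₜ[k] one + one ⊗ₜ[k] (ι a)
  counit_ι : ∀ a : L, counit (ι a) = 0

/-- The graded symmetric algebra of a DG Lie algebra together with its antipode
(`S(a) = -a` on `L`, extended as a graded algebra anti-homomorphism). -/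
structure IsSymLieHopf (L : Type) [AddCommGroup L] [Module k L]
    (ℒ : ℤ → Submodule k L) (lie : L →ₗ[k] L →ₗ[k] L) (dL : L →ₗ[k] L)
    (SL : Type) [AddCommGroup SL] [Module k SL]
    (𝒮 : ℤ → Submodule k SL) (mul : SL →ₗ[k] SL →ₗ[k] SL) (one : SL)
    (bracket : SL →ₗ[k] SL →ₗ[k] SL) (d : SL →ₗ[k] SL)
    (comul : SL →ₗ[k] SL ⊗[k] SL) (counit : SL →ₗ[k] k)
    (ι : L →ₗ[k] SL) (S : SL →ₗ[k] SL)
    extends IsSymLieBialg k L ℒ lie dL SL 𝒮 mul one bracket d comul counit ι : Prop where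
  S_one : S one = one
  S_ι : ∀ a : L, S (ι a) = -(ι a)
  S_mem : ∀ ⦃i : ℤ⦄ ⦃a : SL⦄, a ∈ 𝒮 i → S a ∈ 𝒮 i
  S_anti : ∀ ⦃i j : ℤ⦄ ⦃u v : SL⦄, u ∈ 𝒮 i → v ∈ 𝒮 j →
    S (mul u v) = ((-1 : k) ^ (i * j)) • mul (S v) (S u)

end DGPH

namespace DGPH

open TensorProduct

section AuxHelpers

variable {k : Type} [Field k]

private lemma sg_add (m n : ℤ) : ((-1 : k)) ^ (m + n) = (-1 : k) ^ m * (-1 : k) ^ n :=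
  zpow_add₀ (by norm_num) m n

private lemma sg_mul (m n : ℤ) : ((-1 : k)) ^ m * (-1 : k) ^ n = (-1 : k) ^ (m + n) :=
  (sg_add m n).symm

private lemma sg_two : ((-1 : k)) ^ (2 : ℤ) = 1 := by
  rw [show (2 : ℤ) = 1 + 1 from rfl, sg_add, zpow_one]; norm_num

private lemma sg_even {m n : ℤ} (q : ℤ) (h : m = n + 2 * q) :
    ((-1 : k)) ^ m = (-1 : k) ^ n := by
  subst h; rw [sg_add, zpow_mul, sg_two, one_zpow, mul_one]

private lemma sg_one {m : ℤ} (q : ℤ) (h : m = 2 * q) : ((-1 : k)) ^ m = 1 := by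
  rw [sg_even q (by omega : m = 0 + 2 * q), zpow_zero]

/-- Induction principle for tensor squares of a graded module: it suffices to check a
suitably closed predicate on pure tensors of homogeneous elements. -/
private lemma homog_induction {SL : Type} [AddCommGroup SL] [Module k SL]
    {𝒮 : ℤ → Submodule k SL} (htot : (⨆ i, 𝒮 i) = ⊤)
    {C : SL ⊗[k] SL → Prop} (h0 : C 0) (hadd : ∀ x y, C x → C y → C (x + y))
    (hsmul : ∀ (c : k) (x), C x → C (c • x))
    (hp : ∀ ⦃i j : ℤ⦄ ⦃x y : SL⦄, x ∈ 𝒮 i → y ∈ 𝒮 j → C (x ⊗ₜ[k] y)) :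
    ∀ z : SL ⊗[k] SL, C z := by
  have htop : ∀ x : SL, x ∈ (⨆ i, 𝒮 i) := by rw [htot]; intro x; trivial
  have pure : ∀ x y : SL, C (x ⊗ₜ[k] y) := by
    intro x
    refine Submodule.iSup_induction (motive := fun x : SL => ∀ y : SL, C (x ⊗ₜ[k] y)) 𝒮
      (htop x) ?_ ?_ ?_
    · intro i x hx y
      refine Submodule.iSup_induction (motive := fun y : SL => C (x ⊗ₜ[k] y)) 𝒮 (htop y) ?_ ?_ ?_
      · intro j y hy; exact hp hx hy
      · simpa [TensorProduct.tmul_zero] using h0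
      · intro y y' hy hy'
        simpa [TensorProduct.tmul_add] using hadd _ _ hy hy'
    · intro y; simpa [TensorProduct.zero_tmul] using h0
    · intro x x' hx hx' y
      simpa [TensorProduct.add_tmul] using hadd _ _ (hx y) (hx' y)
  intro z
  have hz : z ∈ Submodule.span k { t : SL ⊗[k] SL | ∃ m n, m ⊗ₜ n = t } := by
    rw [TensorProduct.span_tmul_eq_top]; trivial
  refine Submodule.span_induction (p := fun t _ => C t) ?_ h0 ?_ ?_ hz
  · rintro t ⟨m, n, rfl⟩; exact pure m n
  · intro x y _ _ hx hy; exact hadd x y hx hy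
  · intro c x _ hx; exact hsmul c x hx

end AuxHelpers

/-- For a finite-dimensional DG Lie algebra `L` over a field of
characteristic zero, the graded symmetric algebra `S(L)` with its DG Poisson Hopf structure
satisfies `{S(a₍₁₎), a₍₂₎} = 0` for all `a ∈ S(L)`. -/
theorem symLie_antipode_bracket {k : Type} [Field k] [CharZero k]
    (L : Type) [AddCommGroup L] [Module k L] [FiniteDimensional k L]
    (ℒ : ℤ → Submodule k L) (lie : L →ₗ[k] L →ₗ[k] L) (dL : L →ₗ[k] L)
    (SL : Type) [AddCommGroup SL] [Module k SL]
    (𝒮 : ℤ → Submodule k SL) (mul : SL →ₗ[k] SL →ₗ[k] SL) (one : SL)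
    (bracket : SL →ₗ[k] SL →ₗ[k] SL) (d : SL →ₗ[k] SL)
    (comul : SL →ₗ[k] SL ⊗[k] SL) (counit : SL →ₗ[k] k)
    (ι : L →ₗ[k] SL) (S : SL →ₗ[k] SL)
    (hS : IsSymLieHopf k L ℒ lie dL SL 𝒮 mul one bracket d comul counit ι S) :
    ∀ a : SL,
      TensorProduct.lift bracket ((TensorProduct.map S LinearMap.id) (comul a)) = 0 := by
  classical
  obtain ⟨mul₂, hchar, hcm⟩ := hS.bialg.comul_mul
  have hP := hS.poisson
  have halg := hP.toIsDGAlgebra.toIsGradedAlgebra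
  have hassoc := halg.mul_assoc
  have hone_mem := halg.one_mem
  have hmulone := halg.mul_one
  have honemul := halg.one_mul
  have hmul_mem := halg.mul_mem
  have htot := halg.total
  have hgc : ∀ ⦃i j : ℤ⦄ ⦃a b : SL⦄, a ∈ 𝒮 i → b ∈ 𝒮 j →
      mul a b = ((-1 : k) ^ (i * j)) • mul b a := hP.gcomm
  have hbr_mem : ∀ ⦃i j : ℤ⦄ ⦃a b : SL⦄, a ∈ 𝒮 i → b ∈ 𝒮 j →
      bracket a b ∈ 𝒮 (i + j) := by
    intro i j a b ha hb; simpa using hP.bracket_mem ha hb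
  have hanti : ∀ ⦃i j : ℤ⦄ ⦃a b : SL⦄, a ∈ 𝒮 i → b ∈ 𝒮 j →
      bracket a b = -(((-1 : k) ^ (i * j)) • bracket b a) := by
    intro i j a b ha hb; simpa using hP.bracket_antisymm ha hb
  have hleib : ∀ ⦃i j : ℤ⦄ ⦃a b : SL⦄ (c : SL), a ∈ 𝒮 i → b ∈ 𝒮 j →
      bracket a (mul b c) =
        mul (bracket a b) c + ((-1 : k) ^ (i * j)) • mul b (bracket a c) := by
    intro i j a b c ha hb; simpa using hP.bracket_leibniz c ha hb
  have htop : ∀ x : SL, x ∈ (⨆ i, 𝒮 i) := by rw [htot]; intro x; trivial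
  -- brackets with the unit vanish
  have br_one : ∀ x : SL, bracket x one = 0 := by
    have hhom : ∀ ⦃i : ℤ⦄ ⦃x : SL⦄, x ∈ 𝒮 i → bracket x one = 0 := by
      intro i x hx
      have h := hleib one hx hone_mem
      rw [honemul, hmulone, honemul, mul_zero, zpow_zero, one_smul] at h
      exact (add_left_cancel (show bracket x one + 0 = bracket x one + bracket x one by
        rw [add_zero]; exact h)).symm
    intro x
    refine Submodule.iSup_induction (motive := fun x : SL => bracket x one = 0) 𝒮 (htop x) ?_ ?_ ?_
    · intro i x hx; exact hhom hx
    · simp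
    · intro x y hx hy; simp [map_add, hx, hy]
  have one_br : ∀ x : SL, bracket one x = 0 := by
    intro x
    refine Submodule.iSup_induction (motive := fun x : SL => bracket one x = 0) 𝒮 (htop x) ?_ ?_ ?_
    · intro i x hx
      rw [hanti hone_mem hx, br_one, smul_zero, neg_zero]
    · simp
    · intro x y hx hy; simp [map_add, hx, hy]
  -- the two convolution-type maps
  set F : SL ⊗[k] SL →ₗ[k] SL :=
    (TensorProduct.lift bracket) ∘ₗ (TensorProduct.map S LinearMap.id) with hF
  set Φ : SL ⊗[k] SL →ₗ[k] SL :=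
    (TensorProduct.lift mul) ∘ₗ (TensorProduct.map S LinearMap.id) with hΦ
  have Fp : ∀ x y : SL, F (x ⊗ₜ[k] y) = bracket (S x) y := by
    intro x y; simp [hF]
  have Φp : ∀ x y : SL, Φ (x ⊗ₜ[k] y) = mul (S x) y := by
    intro x y; simp [hΦ]
  -- the auxiliary operator Θ w z = Σ mul (bracket w (S z₁)) z₂
  set Θ : SL →ₗ[k] SL ⊗[k] SL →ₗ[k] SL :=
    (LinearMap.lcomp k SL (TensorProduct.map S LinearMap.id)) ∘ₗ
      (TensorProduct.uncurry (RingHom.id k) SL SL SL) ∘ₗ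
        (LinearMap.llcomp k SL SL (SL →ₗ[k] SL) mul) ∘ₗ bracket with hΘ
  have Θp : ∀ (w x y : SL), Θ w (x ⊗ₜ[k] y) = mul (bracket w (S x)) y := by
    intro w x y; simp [hΘ]
  have Θone : ∀ z, Θ one z = 0 := by
    have : Θ one = 0 := by
      apply TensorProduct.ext'
      intro x y; rw [Θp, one_br]; simp
    rw [this]; simp
  -- core graded-commutative shuffling identity
  have core_mul : ∀ ⦃a b c : ℤ⦄ ⦃s x t : SL⦄ (y : SL), s ∈ 𝒮 a → x ∈ 𝒮 b → t ∈ 𝒮 c →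
      ((-1 : k) ^ (c * b) * (-1 : k) ^ (a * c)) • mul (mul t s) (mul x y) =
        mul (mul s x) (mul t y) := by
    intro a b c s x t y hs hx ht
    have h : mul (mul s x) (mul t y) =
        ((-1 : k) ^ (b * c) * (-1 : k) ^ (a * c)) • mul (mul t s) (mul x y) := by
      calc mul (mul s x) (mul t y) = mul s (mul x (mul t y)) := hassoc _ _ _
        _ = mul s (mul (mul x t) y) := by rw [hassoc]
        _ = mul s (mul (((-1 : k) ^ (b * c)) • mul t x) y) := by rw [hgc hx ht]
        _ = ((-1 : k) ^ (b * c)) • mul s (mul (mul t x) y) := by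
            simp [map_smul, LinearMap.smul_apply]
        _ = ((-1 : k) ^ (b * c)) • mul s (mul t (mul x y)) := by rw [hassoc]
        _ = ((-1 : k) ^ (b * c)) • mul (mul s t) (mul x y) := by rw [hassoc]
        _ = ((-1 : k) ^ (b * c)) • mul (((-1 : k) ^ (a * c)) • mul t s) (mul x y) := by
            rw [hgc hs ht]
        _ = ((-1 : k) ^ (b * c) * (-1 : k) ^ (a * c)) • mul (mul t s) (mul x y) := by
            simp [map_smul, LinearMap.smul_apply, smul_smul]
    rw [h, mul_comm c b]
  -- Δ is multiplicative for the Koszul product, via the antipode side maps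
  have Φmul₂ : ∀ z z' : SL ⊗[k] SL, Φ (mul₂ z z') = mul (Φ z) (Φ z') := by
    have main : ∀ z : SL ⊗[k] SL, ∀ z' : SL ⊗[k] SL, Φ (mul₂ z z') = mul (Φ z) (Φ z') := by
      refine homog_induction htot ?_ ?_ ?_ ?_
      · intro z'; simp
      · intro z w hz hw z'; simp [map_add, LinearMap.add_apply, hz z', hw z']
      · intro c z hz z'; simp [map_smul, LinearMap.smul_apply, hz z']
      · intro i j x y hx hy
        refine homog_induction htot ?_ ?_ ?_ ?_
        · simp
        · intro z w hz hw; simp [map_add, LinearMap.add_apply, hz, hw]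
        · intro c z hz; simp [map_smul, LinearMap.smul_apply, hz]
        · intro c e x' y' hx' hy'
          rw [hchar x y' hx' hy, map_smul, Φp, Φp, Φp, hS.S_anti hx hx', map_smul,
            LinearMap.smul_apply, smul_smul]
          exact core_mul y' (hS.S_mem hx) hy (hS.S_mem hx')
    exact main
  -- the antipode property holds (S is a convolution inverse of the identity)
  have hAnti : ∀ u : SL, Φ (comul u) = counit u • one := by
    set P₁ : Submodule k SL := LinearMap.ker ((Φ ∘ₗ comul) -
      (LinearMap.toSpanSingleton k SL one) ∘ₗ counit) with hP₁
    have hmem : ∀ u : SL, u ∈ P₁ ↔ Φ (comul u) = counit u • one := by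
      intro u
      simp [hP₁, LinearMap.mem_ker, LinearMap.sub_apply, LinearMap.comp_apply,
        LinearMap.toSpanSingleton_apply, sub_eq_zero]
    have hgen : P₁ = ⊤ := by
      refine hS.generates P₁ ?_ ?_ ?_
      · rw [hmem, hS.bialg.comul_one, Φp, hS.S_one, honemul, hS.bialg.counit_one, one_smul]
      · intro a
        rw [hmem, hS.comul_ι, map_add, Φp, Φp, hS.S_ι, hS.S_one, hS.counit_ι, zero_smul,
          hmulone, honemul]
        exact neg_add_cancel _
      · intro u v hu hv
        rw [hmem] at hu hv ⊢
        rw [hcm, Φmul₂, hu, hv, hS.bialg.counit_mul]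
        simp [map_smul, LinearMap.smul_apply, smul_smul, honemul, mul_comm]
    intro u
    exact (hmem u).1 (hgen ▸ Submodule.mem_top)
  -- left Leibniz rule
  have leftLeib : ∀ ⦃i j l : ℤ⦄ ⦃y z x : SL⦄, y ∈ 𝒮 i → z ∈ 𝒮 j → x ∈ 𝒮 l →
      bracket (mul y z) x =
        mul y (bracket z x) + ((-1 : k) ^ (j * l)) • mul (bracket y x) z := by
    intro i j l y z x hy hz hx
    rw [hanti (hmul_mem hy hz) hx, hleib z hx hy, hanti hx hy, hanti hx hz]
    simp only [map_neg, map_smul, LinearMap.neg_apply, LinearMap.smul_apply, smul_neg,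
      neg_neg, smul_add, smul_smul, neg_add_rev]
    match_scalars
    · rw [mul_one, sg_mul, sg_mul]; exact sg_one (i * l + j * l) (by ring)
    · rw [mul_one, mul_one, sg_mul]; exact sg_even (i * l) (by ring)
  -- the key pointwise Poisson identity
  have lemA : ∀ ⦃a b c e : ℤ⦄ ⦃s x t y : SL⦄, s ∈ 𝒮 a → x ∈ 𝒮 b → t ∈ 𝒮 c → y ∈ 𝒮 e →
      ((-1 : k) ^ (c * b) * (-1 : k) ^ (a * c)) • bracket (mul t s) (mul x y) =
        mul (bracket s x) (mul t y)
        - mul (bracket (mul s x) t) y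
        + ((-1 : k) ^ (a * b)) • mul x (bracket s (mul t y))
        + ((-1 : k) ^ (a * b)) • mul (mul x s) (bracket t y) := by
    intro a b c e s x t y hs hx ht hy
    have hbsx := hbr_mem hs hx
    have hbtx := hbr_mem ht hx
    have hbsy := hbr_mem hs hy
    have hbty := hbr_mem ht hy
    have hbst := hbr_mem hs ht
    have c1 : mul (bracket s x) (mul t y) =
        ((-1 : k) ^ ((a + b) * c)) • mul t (mul (bracket s x) y) := by
      calc mul (bracket s x) (mul t y) = mul (mul (bracket s x) t) y := (hassoc _ _ _).symm
        _ = mul (((-1 : k) ^ ((a + b) * c)) • mul t (bracket s x)) y := by rw [hgc hbsx ht]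
        _ = ((-1 : k) ^ ((a + b) * c)) • mul (mul t (bracket s x)) y := by
            simp [map_smul, LinearMap.smul_apply]
        _ = ((-1 : k) ^ ((a + b) * c)) • mul t (mul (bracket s x) y) := by rw [hassoc]
    have c2 : mul t (mul x (bracket s y)) =
        ((-1 : k) ^ (c * b)) • mul x (mul t (bracket s y)) := by
      calc mul t (mul x (bracket s y)) = mul (mul t x) (bracket s y) := (hassoc _ _ _).symm
        _ = mul (((-1 : k) ^ (c * b)) • mul x t) (bracket s y) := by rw [hgc ht hx]
        _ = ((-1 : k) ^ (c * b)) • mul (mul x t) (bracket s y) := by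
            simp [map_smul, LinearMap.smul_apply]
        _ = ((-1 : k) ^ (c * b)) • mul x (mul t (bracket s y)) := by rw [hassoc]
    have c3 : mul (mul s (bracket t x)) y =
        (((-1 : k) ^ (a * (c + b))) * ((-1 : k) ^ (a * e))) • mul (mul (bracket t x) y) s := by
      calc mul (mul s (bracket t x)) y
          = mul (((-1 : k) ^ (a * (c + b))) • mul (bracket t x) s) y := by rw [hgc hs hbtx]
        _ = ((-1 : k) ^ (a * (c + b))) • mul (mul (bracket t x) s) y := by
            simp [map_smul, LinearMap.smul_apply]
        _ = ((-1 : k) ^ (a * (c + b))) • mul (bracket t x) (mul s y) := by rw [hassoc]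
        _ = ((-1 : k) ^ (a * (c + b))) • mul (bracket t x) (((-1 : k) ^ (a * e)) • mul y s) := by
            rw [hgc hs hy]
        _ = (((-1 : k) ^ (a * (c + b))) * ((-1 : k) ^ (a * e))) • mul (bracket t x) (mul y s) := by
            simp [map_smul, smul_smul]
        _ = (((-1 : k) ^ (a * (c + b))) * ((-1 : k) ^ (a * e))) • mul (mul (bracket t x) y) s := by
            rw [hassoc]
    have c4 : mul x (mul (bracket s t) y) =
        ((-1 : k) ^ (b * (a + c))) • mul (mul (bracket s t) x) y := by
      calc mul x (mul (bracket s t) y) = mul (mul x (bracket s t)) y := (hassoc _ _ _).symm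
        _ = mul (((-1 : k) ^ (b * (a + c))) • mul (bracket s t) x) y := by rw [hgc hx hbst]
        _ = ((-1 : k) ^ (b * (a + c))) • mul (mul (bracket s t) x) y := by
            simp [map_smul, LinearMap.smul_apply]
    have c5 : mul (mul x s) (bracket t y) =
        ((-1 : k) ^ (a * (c + e))) • mul (mul x (bracket t y)) s := by
      calc mul (mul x s) (bracket t y) = mul x (mul s (bracket t y)) := hassoc _ _ _
        _ = mul x (((-1 : k) ^ (a * (c + e))) • mul (bracket t y) s) := by rw [hgc hs hbty]
        _ = ((-1 : k) ^ (a * (c + e))) • mul x (mul (bracket t y) s) := by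
            simp [map_smul, LinearMap.smul_apply]
        _ = ((-1 : k) ^ (a * (c + e))) • mul (mul x (bracket t y)) s := by rw [hassoc]
    rw [leftLeib ht hs (hmul_mem hx hy), hleib y hs hx, hleib y ht hx,
      leftLeib hs hx ht, hleib y hs ht, hanti hx ht]
    simp only [map_add, map_smul, map_neg, LinearMap.add_apply, LinearMap.smul_apply,
      LinearMap.neg_apply, smul_add, smul_smul, smul_neg, neg_neg, neg_add_rev]
    rw [c1, c2, c3, c4, c5]
    match_scalars
    · simp only [mul_one, sg_mul]; exact sg_even 0 (by ring)
    · simp only [mul_one, sg_mul]; exact sg_even (c * b) (by ring)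
    · simp only [mul_one, neg_neg, sg_mul]; exact sg_even 0 (by ring)
    · simp only [mul_one, sg_mul]; exact sg_even (c * b) (by ring)
    · simp only [mul_one, sg_mul]
      rw [sg_even (a * b) (show a * b + b * (a + c) = b * c + 2 * (a * b) by ring),
        neg_add_cancel]
  -- Step 1: evaluation on a pure homogeneous tensor against Δv
  have step1 : ∀ v : SL, F (comul v) = 0 →
      ∀ ⦃a b : ℤ⦄ ⦃u₁ u₂ : SL⦄, u₁ ∈ 𝒮 a → u₂ ∈ 𝒮 b →
      F (mul₂ (u₁ ⊗ₜ[k] u₂) (comul v)) =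
        counit v • F (u₁ ⊗ₜ[k] u₂) - Θ (Φ (u₁ ⊗ₜ[k] u₂)) (comul v) := by
    intro v hv a b u₁ u₂ hu₁ hu₂
    have D : ∀ z : SL ⊗[k] SL, F (mul₂ (u₁ ⊗ₜ[k] u₂) z) =
        mul (bracket (S u₁) u₂) (Φ z) - Θ (mul (S u₁) u₂) z
        + ((-1 : k) ^ (a * b)) • mul u₂ (bracket (S u₁) (Φ z))
        + ((-1 : k) ^ (a * b)) • mul (mul u₂ (S u₁)) (F z) := by
      refine homog_induction htot ?_ ?_ ?_ ?_
      · simp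
      · intro z w hz hw
        simp only [map_add, LinearMap.add_apply, hz, hw, smul_add]
        abel
      · intro c z hz
        simp only [map_smul, LinearMap.smul_apply, hz, smul_add, smul_sub, smul_smul,
          mul_comm]
      · intro c e v₁ v₂ hv₁ hv₂
        rw [hchar u₁ v₂ hv₁ hu₂, map_smul, Fp, hS.S_anti hu₁ hv₁, map_smul,
          LinearMap.smul_apply, smul_smul, Φp, Θp, Fp]
        exact lemA (hS.S_mem hu₁) hu₂ (hS.S_mem hv₁) hv₂
    have h := D (comul v)
    rw [hv, hAnti v] at h
    rw [Fp, Φp]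
    rw [h]
    simp [map_smul, hmulone, br_one]
  -- Step 2: multiplicativity of the kernel property
  have step2 : ∀ u v : SL, F (comul u) = 0 → F (comul v) = 0 →
      F (comul (mul u v)) = 0 := by
    intro u v hu hv
    rw [hcm]
    have C : ∀ z : SL ⊗[k] SL,
        F (mul₂ z (comul v)) = counit v • F z - Θ (Φ z) (comul v) := by
      refine homog_induction htot ?_ ?_ ?_ ?_
      · simp
      · intro z w hz hw
        simp only [map_add, LinearMap.add_apply, hz, hw, smul_add]
        abel
      · intro c z hz
        simp only [map_smul, LinearMap.smul_apply, hz, smul_sub, smul_smul, mul_comm]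
      · intro a b u₁ u₂ h1 h2; exact step1 v hv h1 h2
    rw [C (comul u), hu, hAnti u, smul_zero, map_smul, LinearMap.smul_apply, Θone,
      smul_zero, zero_sub, neg_zero]
  -- conclude via the generation property
  set P₂ : Submodule k SL := LinearMap.ker (F ∘ₗ comul) with hP₂
  have hmem₂ : ∀ u : SL, u ∈ P₂ ↔ F (comul u) = 0 := by
    intro u; simp [hP₂, LinearMap.mem_ker, LinearMap.comp_apply]
  have hgen₂ : P₂ = ⊤ := by
    refine hS.generates P₂ ?_ ?_ ?_
    · rw [hmem₂, hS.bialg.comul_one, Fp, hS.S_one, br_one]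
    · intro a
      rw [hmem₂, hS.comul_ι, map_add, Fp, Fp, hS.S_ι, hS.S_one, one_br, map_neg,
        LinearMap.neg_apply, br_one, neg_zero, zero_add]
    · intro u v hu hv
      rw [hmem₂] at hu hv ⊢
      exact step2 u v hu hv
  intro a
  have : a ∈ P₂ := hgen₂ ▸ Submodule.mem_top
  rw [hmem₂] at this
  simpa [hF, LinearMap.comp_apply] using this

end DGPH
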